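/- Under Assumption 1, with A ⊆ H_0 a fixed set of m_a indices, f_attack order-invariant, s̃ a permutation-invariant score function, and the post-attack scores almost surely pairwise distinct, for every unattacked true-null test index i ∈ H_0∖A the quantity (n−k+1)·p̃_i is uniformly distributed on the integers {1,…,n−k+1}. -/
import Mathlib


open MeasureTheory ProbabilityTheory Finset
open scoped ENNReal

noncomputable section

/-- **Uniformity of the conformal p-value of an unattacked null** (Lemma 3(ii)).
With `A ⊆ H0` a fixed set of `mₐ` indices, the attack map order-invariant, the score function
permutation-invariant and the post-attack scores almost surely pairwise distinct, under
Assumption 1, for every unattacked true-null test index `i ∈ H0 \ A` the quantity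
`(n−k+1)·p̃_i` is uniformly distributed on the integers `{1,…,n−k+1}`. -/
theorem pvalue_uniform_after_attack
    {Ω : Type*} [MeasureSpace Ω] [IsProbabilityMeasure (ℙ : Measure Ω)]
    {𝒵 : Type*} [MeasurableSpace 𝒵]
    (n m k m₀ mₐ : ℕ) (hk1 : 1 ≤ k) (hkn : k ≤ n) (hm : 1 ≤ m)
    -- the set of true-null test indices, `H1 = {1,…,m} \ H0` being the non-null indices
    (H0 : Finset ℕ) (hH0 : H0 ⊆ Finset.Icc 1 m) (hm₀ : H0.card = m₀)
    -- the attack set: a fixed subset of `H0` of cardinality `mₐ`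
    (A : Finset ℕ) (hAH0 : A ⊆ H0) (hmₐ : A.card = mₐ)
    -- training and test samples `Z_1, …, Z_{n+m}`
    (Z : Ω → ℕ → 𝒵) (hZmeas : Measurable Z)
    -- Assumption 1: exchangeability of the nulls given the non-nulls
    (hexch : ∀ σ : Equiv.Perm ℕ,
      (∀ i ∉ Finset.Icc 1 n ∪ H0.image (fun j => n + j), σ i = i) →
      Measure.map (fun ω => fun i => Z ω (σ i)) ℙ = Measure.map Z ℙ)
    -- the attack map, order-invariant in the unordered set `{Z_1,…,Z_n, Z_{n+j} : j ∈ H0 \ A}`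
    (fatk : 𝒵 → (ℕ → 𝒵) → 𝒵)
    (hfmeas : Measurable fun q : 𝒵 × (ℕ → 𝒵) => fatk q.1 q.2)
    (hford : ∀ (z : 𝒵) (data : ℕ → 𝒵) (σ : Equiv.Perm ℕ),
      (∀ i ∉ Finset.Icc 1 n ∪ (H0 \ A).image (fun j => n + j), σ i = i) →
      fatk z (fun i => data (σ i)) = fatk z data)
    -- the post-attack samples
    (Zt : Ω → ℕ → 𝒵)
    (hZtA : ∀ ω, ∀ j ∈ A, Zt ω (n + j) = fatk (Z ω (n + j)) (Z ω))
    (hZtn : ∀ ω i, (∀ j ∈ A, i ≠ n + j) → Zt ω i = Z ω i)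
    -- the post-attack score function, permutation-invariant over the block `{k+1,…,n+m}`
    (st : 𝒵 → (ℕ → 𝒵) → ℝ)
    (hstmeas : Measurable fun q : 𝒵 × (ℕ → 𝒵) => st q.1 q.2)
    (hstinv : ∀ (z : 𝒵) (data : ℕ → 𝒵) (σ : Equiv.Perm ℕ),
      (∀ i ∉ Finset.Icc (k + 1) (n + m), σ i = i) →
      st z (fun i => data (σ i)) = st z data)
    -- the post-attack scores `S_i = s̃(Z̃_i; Z̃)`
    (S : Ω → ℕ → ℝ) (hS : ∀ ω i, S ω i = st (Zt ω i) (Zt ω))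
    -- the post-attack scores are almost surely pairwise distinct
    (hdist : ∀ᵐ ω ∂ℙ, ∀ i ∈ Finset.Icc (k + 1) (n + m), ∀ j ∈ Finset.Icc (k + 1) (n + m),
      i ≠ j → S ω i ≠ S ω j)
    -- the post-attack conformal p-values
    (p : Ω → ℕ → ℝ)
    (hp : ∀ ω j, p ω j =
      (1 + (((Finset.Icc (k + 1) n).filter fun i => S ω (n + j) ≤ S ω i).card : ℝ)) /
        ((n : ℝ) - k + 1))
    :
    ∀ i ∈ H0 \ A, ∀ r ∈ Finset.Icc 1 (n - k + 1),
      ℙ {ω | ((n : ℝ) - k + 1) * p ω i = (r : ℝ)} = 1 / ((n - k + 1 : ℕ) : ℝ≥0∞) := by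
  classical
  intro i hi r hr
  obtain ⟨hiH0, hiA⟩ := Finset.mem_sdiff.mp hi
  have hi1m := Finset.mem_Icc.mp (hH0 hiH0)
  obtain ⟨hi1, him⟩ := hi1m
  rw [Finset.mem_Icc] at hr
  obtain ⟨hr1, hrN⟩ := hr
  set N : ℕ := n - k + 1 with hN
  set Apos : Finset ℕ := A.image (fun j => n + j) with hApos
  have hAposgt : ∀ w ∈ Apos, n < w ∧ w ≠ n + i := by
    intro w hw
    obtain ⟨j, hj, rfl⟩ := Finset.mem_image.mp hw
    have hj1 := (Finset.mem_Icc.mp (hH0 (hAH0 hj))).1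
    refine ⟨by omega, ?_⟩
    intro h
    have : j = i := by omega
    exact hiA (this ▸ hj)
  set zt : (ℕ → 𝒵) → ℕ → 𝒵 := fun z u => if u ∈ Apos then fatk (z u) z else z u with hzt
  have hZt : ∀ ω, Zt ω = zt (Z ω) := by
    intro ω; funext u
    by_cases hu : u ∈ Apos
    · obtain ⟨j, hj, rfl⟩ := Finset.mem_image.mp hu
      simp only [hzt, if_pos hu]
      exact hZtA ω j hj
    · simp only [hzt, if_neg hu]
      refine hZtn ω u fun j hj h => hu ?_
      subst h
      exact Finset.mem_image_of_mem _ hj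
  set F : (ℕ → 𝒵) → ℕ → ℝ := fun z u => st (zt z u) (zt z) with hF
  have hSF : ∀ ω, S ω = F (Z ω) := by
    intro ω; funext u; rw [hS, hZt]
  set T : Finset ℕ := insert (n + i) (Finset.Icc (k + 1) n) with hT
  have hniT : n + i ∉ Finset.Icc (k + 1) n := by
    simp only [Finset.mem_Icc]; omega
  have hTcard : T.card = N := by
    rw [hT, Finset.card_insert_of_notMem hniT, Nat.card_Icc]; omega
  have hztm : Measurable zt := by
    apply measurable_pi_lambda
    intro u
    by_cases hu : u ∈ Apos
    · simp only [hzt, if_pos hu]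
      have h : Measurable fun z : ℕ → 𝒵 => (z u, z) :=
        (measurable_pi_apply u).prodMk measurable_id'
      exact hfmeas.comp h
    · simp only [hzt, if_neg hu]
      exact measurable_pi_apply u
  have hFm : ∀ u, Measurable fun z => F z u := by
    intro u
    have h : Measurable fun z : ℕ → 𝒵 => (zt z u, zt z) :=
      ((measurable_pi_apply u).comp hztm).prodMk hztm
    exact hstmeas.comp h
  set B : ℕ → Set (ℕ → 𝒵) := fun t => {z | (T.filter fun u => F z t ≤ F z u).card = r} with hB
  have hBm : ∀ t, MeasurableSet (B t) := by
    intro t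
    have hEq : B t = (fun z => ∑ u ∈ T, if F z t ≤ F z u then 1 else 0) ⁻¹' {r} := by
      ext z
      simp only [hB, Set.mem_setOf_eq, Set.mem_preimage, Set.mem_singleton_iff,
        Finset.card_filter]
    rw [hEq]
    have hmeas : Measurable fun z => ∑ u ∈ T, if F z t ≤ F z u then 1 else 0 :=
      Finset.measurable_sum T fun u _ =>
        Measurable.ite (measurableSet_le (hFm t) (hFm u)) measurable_const measurable_const
    exact hmeas (measurableSet_singleton r)
  have hd0 : ((n : ℝ) - k + 1) ≠ 0 := by
    have hkr : (k : ℝ) ≤ n := Nat.cast_le.mpr hkn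
    linarith
  -- the goal event equals the rank event for n + i
  have hgoalset : {ω | ((n : ℝ) - k + 1) * p ω i = (r : ℝ)} = Z ⁻¹' B (n + i) := by
    ext ω
    simp only [Set.mem_setOf_eq, Set.mem_preimage, hB, Set.mem_setOf_eq]
    rw [hp, mul_comm, div_mul_cancel₀ _ hd0]
    have hceq : (T.filter fun u => F (Z ω) (n + i) ≤ F (Z ω) u).card
        = ((Finset.Icc (k + 1) n).filter fun i' => S ω (n + i) ≤ S ω i').card + 1 := by
      rw [hT, Finset.filter_insert, if_pos le_rfl,
        Finset.card_insert_of_notMem fun h => hniT (Finset.filter_subset _ _ h)]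
      congr 2
      apply Finset.filter_congr
      intro u _
      simp [hSF ω]
    rw [hceq]
    rw [show (1 : ℝ) + (((Finset.Icc (k + 1) n).filter fun i' => S ω (n + i) ≤ S ω i').card : ℝ)
        = ((((Finset.Icc (k + 1) n).filter fun i' => S ω (n + i) ≤ S ω i').card + 1 : ℕ) : ℝ) by
      push_cast; ring, Nat.cast_inj]
  -- equal probabilities via exchangeability
  have hmove : ∀ t ∈ Finset.Icc (k + 1) n, ℙ (Z ⁻¹' B t) = ℙ (Z ⁻¹' B (n + i)) := by
    intro t ht
    rw [Finset.mem_Icc] at ht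
    set σ : Equiv.Perm ℕ := Equiv.swap t (n + i) with hσ
    have hfixgen : ∀ u, u ≠ t → u ≠ n + i → σ u = u := fun u h1 h2 =>
      Equiv.swap_apply_of_ne_of_ne h1 h2
    have hσexch : ∀ u ∉ Finset.Icc 1 n ∪ H0.image (fun j => n + j), σ u = u := by
      intro u hu
      refine hfixgen u ?_ ?_
      · rintro rfl
        exact hu (Finset.mem_union_left _ (Finset.mem_Icc.mpr ⟨by omega, ht.2⟩))
      · rintro rfl
        exact hu (Finset.mem_union_right _ (Finset.mem_image_of_mem _ hiH0))
    have hσfixA : ∀ w ∈ Apos, σ w = w := by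
      intro w hw
      obtain ⟨hw1, hw2⟩ := hAposgt w hw
      exact hfixgen w (by omega) hw2
    have hσApos : ∀ w, σ w ∈ Apos → w ∈ Apos := by
      intro w hw
      have h2 := hσfixA _ hw
      have h3 : σ (σ w) = w := Equiv.swap_apply_self t (n + i) w
      rw [h2] at h3
      rwa [← h3]
    have hkey : ∀ z : ℕ → 𝒵, zt (fun v => z (σ v)) = fun v => zt z (σ v) := by
      intro z; funext v
      by_cases hv : v ∈ Apos
      · have hσv : σ v = v := hσfixA v hv
        simp only [hzt, hσv, if_pos hv]
        apply hford
        intro w hw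
        refine hfixgen w ?_ ?_
        · rintro rfl
          exact hw (Finset.mem_union_left _ (Finset.mem_Icc.mpr ⟨by omega, ht.2⟩))
        · rintro rfl
          exact hw (Finset.mem_union_right _ (Finset.mem_image_of_mem _ hi))
      · have hσv : σ v ∉ Apos := fun h => hv (hσApos v h)
        simp only [hzt, if_neg hv, if_neg hσv]
    have hFσ : ∀ z u, F (fun v => z (σ v)) u = F z (σ u) := by
      intro z u
      simp only [hF, hkey z]
      apply hstinv
      intro w hw
      rw [Finset.mem_Icc] at hw
      push_neg at hw
      refine hfixgen w ?_ ?_ <;> [skip; skip] <;> rintro rfl <;> omega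
    have hσT : ∀ u ∈ T, σ u ∈ T := by
      intro u hu
      rcases Finset.mem_insert.mp hu with h | h
      · subst h
        rw [hσ, Equiv.swap_apply_right]
        exact Finset.mem_insert_of_mem (Finset.mem_Icc.mpr ht)
      · by_cases h2 : u = t
        · subst h2
          rw [hσ, Equiv.swap_apply_left]
          exact Finset.mem_insert_self _ _
        · rw [hfixgen u h2 (by rintro rfl; exact hniT h)]
          exact Finset.mem_insert_of_mem h
    have hpre : (fun ω => fun v => Z ω (σ v)) ⁻¹' B t = Z ⁻¹' B (n + i) := by
      ext ω
      simp only [Set.mem_preimage, hB, Set.mem_setOf_eq]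
      have h1 : ∀ u, F (fun v => Z ω (σ v)) u = F (Z ω) (σ u) := hFσ (Z ω)
      have hσt : σ t = n + i := Equiv.swap_apply_left t (n + i)
      have hcard : (T.filter fun u => F (fun v => Z ω (σ v)) t ≤ F (fun v => Z ω (σ v)) u).card
          = (T.filter fun u => F (Z ω) (n + i) ≤ F (Z ω) u).card := by
        apply Finset.card_bij (fun u _ => σ u)
        · intro u hu
          rw [Finset.mem_filter] at hu ⊢
          refine ⟨hσT u hu.1, ?_⟩
          have := hu.2
          rwa [h1, h1, hσt] at this
        · intro u1 hu1 u2 hu2 h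
          exact σ.injective h
        · intro v hv
          rw [Finset.mem_filter] at hv
          refine ⟨σ v, ?_, by rw [hσ]; exact Equiv.swap_apply_self t (n + i) v⟩
          rw [Finset.mem_filter]
          refine ⟨hσT v hv.1, ?_⟩
          rw [h1, h1, hσt, Equiv.swap_apply_self]
          exact hv.2
      rw [hcard]
    have hmapped : Measurable fun ω => fun v => Z ω (σ v) :=
      measurable_pi_lambda _ fun v => (measurable_pi_apply (σ v)).comp hZmeas
    calc ℙ (Z ⁻¹' B t) = Measure.map Z ℙ (B t) := (Measure.map_apply hZmeas (hBm t)).symm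
      _ = Measure.map (fun ω => fun v => Z ω (σ v)) ℙ (B t) := by rw [hexch σ hσexch]
      _ = ℙ ((fun ω => fun v => Z ω (σ v)) ⁻¹' B t) := Measure.map_apply hmapped (hBm t)
      _ = ℙ (Z ⁻¹' B (n + i)) := by rw [hpre]
  -- rank counting: for distinct scores, ranks are injective and cover Icc 1 N
  have hrank : ∀ s : ℕ → ℝ, (∀ u ∈ T, ∀ v ∈ T, u ≠ v → s u ≠ s v) →
      ∀ t1 ∈ T, ∀ t2 ∈ T, t1 ≠ t2 →
      (T.filter fun u => s t1 ≤ s u).card ≠ (T.filter fun u => s t2 ≤ s u).card := by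
    intro s hinj t1 ht1 t2 ht2 hne
    have key : ∀ a ∈ T, ∀ b ∈ T, s a < s b →
        (T.filter fun u => s b ≤ s u).card < (T.filter fun u => s a ≤ s u).card := by
      intro a ha b hb hab
      apply Finset.card_lt_card
      rw [Finset.ssubset_iff_of_subset]
      · exact ⟨a, Finset.mem_filter.mpr ⟨ha, le_rfl⟩,
          fun h => absurd (Finset.mem_filter.mp h).2 (not_le.mpr hab)⟩
      · intro u hu
        rw [Finset.mem_filter] at hu ⊢
        exact ⟨hu.1, le_trans hab.le hu.2⟩
    rcases lt_or_gt_of_ne (hinj t1 ht1 t2 ht2 hne) with h | h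
    · exact (key t1 ht1 t2 ht2 h).ne'
    · exact (key t2 ht2 t1 ht1 h).ne
  have hcover : ∀ s : ℕ → ℝ, (∀ u ∈ T, ∀ v ∈ T, u ≠ v → s u ≠ s v) →
      ∃ t ∈ T, (T.filter fun u => s t ≤ s u).card = r := by
    intro s hinj
    have hsurj := Finset.surj_on_of_inj_on_of_card_le
      (s := T) (t := Finset.Icc 1 N)
      (fun t _ => (T.filter fun u => s t ≤ s u).card)
      (fun t ht => Finset.mem_Icc.mpr ⟨Finset.card_pos.mpr
          ⟨t, Finset.mem_filter.mpr ⟨ht, le_rfl⟩⟩,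
        hTcard ▸ Finset.card_le_card (Finset.filter_subset _ _)⟩)
      (fun t1 t2 ht1 ht2 h => by
        by_contra hne
        exact hrank s hinj t1 ht1 t2 ht2 hne h)
      (by rw [Nat.card_Icc, hTcard]; omega)
    obtain ⟨t, ht, hteq⟩ := hsurj r (Finset.mem_Icc.mpr ⟨hr1, hrN⟩)
    exact ⟨t, ht, hteq.symm⟩
  -- a.e. distinctness on a measurable full set
  obtain ⟨Dc, hDcsub, hDcm, hDc0⟩ := exists_measurable_superset_of_null (ae_iff.mp hdist)
  set D : Set Ω := Dcᶜ with hD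
  have hDm : MeasurableSet D := hDcm.compl
  have hD1 : ℙ D = 1 := by
    rw [hD, measure_compl hDcm (measure_ne_top _ _), hDc0]
    simp
  have hTsub : ∀ u ∈ T, u ∈ Finset.Icc (k + 1) (n + m) := by
    intro u hu
    rcases Finset.mem_insert.mp hu with h | h
    · subst h; rw [Finset.mem_Icc]; omega
    · rw [Finset.mem_Icc] at h ⊢; omega
  have hDdist : ∀ ω ∈ D, ∀ u ∈ T, ∀ v ∈ T, u ≠ v → S ω u ≠ S ω v := by
    intro ω hω u hu v hv huv
    have hP : ¬ ¬ (∀ i ∈ Finset.Icc (k + 1) (n + m), ∀ j ∈ Finset.Icc (k + 1) (n + m),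
        i ≠ j → S ω i ≠ S ω j) := fun h => hω (hDcsub h)
    push_neg at hP
    exact hP u (hTsub u hu) v (hTsub v hv) huv
  set E : ℕ → Set Ω := fun t => Z ⁻¹' B t with hE
  have hEm : ∀ t, MeasurableSet (E t) := fun t => hZmeas (hBm t)
  have hEalt : ∀ t ω, ω ∈ E t ↔ (T.filter fun u => S ω t ≤ S ω u).card = r := by
    intro t ω
    simp only [hE, Set.mem_preimage, hB, Set.mem_setOf_eq, ← hSF ω]
  -- partition
  have hdisj : (↑T : Set ℕ).PairwiseDisjoint fun t => E t ∩ D := by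
    intro t1 ht1 t2 ht2 hne
    rw [Function.onFun, Set.disjoint_left]
    intro ω hω1 hω2
    obtain ⟨he1, hd1⟩ := hω1
    obtain ⟨he2, _⟩ := hω2
    rw [hEalt] at he1 he2
    exact hrank (S ω) (hDdist ω hd1) t1 ht1 t2 ht2 hne (he1.trans he2.symm)
  have hunion : (⋃ t ∈ T, E t ∩ D) = D := by
    apply Set.Subset.antisymm
    · intro ω hω
      simp only [Set.mem_iUnion] at hω
      obtain ⟨t, _, _, hd⟩ := hω
      exact hd
    · intro ω hω
      obtain ⟨t, ht, hteq⟩ := hcover (S ω) (hDdist ω hω)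
      simp only [Set.mem_iUnion]
      exact ⟨t, ht, (hEalt t ω).mpr hteq, hω⟩
  have hsum : ∑ t ∈ T, ℙ (E t ∩ D) = 1 := by
    rw [← measure_biUnion_finset hdisj fun t _ => (hEm t).inter hDm, hunion, hD1]
  have hsum2 : ∑ t ∈ T, ℙ (E t) = 1 := by
    rw [← hsum]
    exact Finset.sum_congr rfl fun t _ => (measure_inter_conull (by rwa [hD, compl_compl])).symm
  have hsum3 : (N : ℝ≥0∞) * ℙ (E (n + i)) = 1 := by
    rw [← hsum2]
    rw [Finset.sum_congr rfl (fun t ht => ?_), Finset.sum_const, hTcard, nsmul_eq_mul]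
    rcases Finset.mem_insert.mp ht with h | h
    · rw [h]
    · exact hmove t h
  rw [hgoalset]
  have hNne : (N : ℝ≥0∞) ≠ 0 := by
    simp only [ne_eq, Nat.cast_eq_zero]
    omega
  have hfin : ℙ (Z ⁻¹' B (n + i)) = 1 / (N : ℝ≥0∞) := by
    rw [ENNReal.eq_div_iff hNne (ENNReal.natCast_ne_top N)]
    exact hsum3
  exact hfin

end
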